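/- For all nonnegative integers n and l, Σ_{k=0}^{n} B(n,k) · b(k,l) = δ_{n,l}. -/

import Mathlib

/-- `besselB n k` is the number of set partitions of `[n]` into `k` blocks,
each of size one or two (the Bessel number of the second kind). -/
noncomputable def besselB (n k : ℕ) : ℕ :=
  Nat.card {P : Finset (Finset (Fin n)) //
    (∀ b ∈ P, b.card = 1 ∨ b.card = 2) ∧
    (∀ i : Fin n, ∃! b, b ∈ P ∧ i ∈ b) ∧
    P.card = k}

/-- The signless Bessel number of the first kind `a(n,k)`. -/
def aQ (n k : ℕ) : ℚ :=
  (Nat.factorial (2 * n - k - 1) : ℚ) /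
    (2 ^ (n - k) * Nat.factorial (n - k) * Nat.factorial (k - 1))

/-- The Bessel number of the first kind `b(n,k)`. -/
def besselb (n k : ℕ) : ℚ :=
  if n = 0 ∧ k = 0 then 1
  else if 1 ≤ k ∧ k ≤ n then (-1) ^ (n - k) * aQ n k
  else 0


open Finset

variable {α : Type*} {β : Type*} [DecidableEq α] [DecidableEq β]

/-- partitions of `s` into `k` blocks of size 1 or 2 -/
def IsPP (s : Finset α) (k : ℕ) (P : Finset (Finset α)) : Prop :=
  (∀ b ∈ P, b ⊆ s) ∧ (∀ b ∈ P, b.card = 1 ∨ b.card = 2) ∧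
  (∀ i ∈ s, ∃! b, b ∈ P ∧ i ∈ b) ∧ P.card = k

open Classical in
noncomputable def pc (s : Finset α) (k : ℕ) : ℕ :=
  (s.powerset.powerset.filter (IsPP s k)).card

lemma mem_pcset {s : Finset α} {k : ℕ} {P : Finset (Finset α)}
    [DecidablePred (IsPP s k)] :
    P ∈ s.powerset.powerset.filter (IsPP s k) ↔ IsPP s k P := by
  simp only [mem_filter, mem_powerset, and_iff_right_iff_imp]
  intro h
  intro b hb
  exact mem_powerset.2 (h.1 b hb)

set_option linter.unusedSectionVars false

lemma IsPP.image {s : Finset α} {k : ℕ} {P : Finset (Finset α)} (f : α → β)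
    (hf : Set.InjOn f s) (h : IsPP s k P) :
    IsPP (s.image f) k (P.image (fun b => b.image f)) := by
  obtain ⟨hsub, hcard, hcov, hk⟩ := h
  have hbinj : ∀ b ∈ P, ∀ c ∈ P, b.image f = c.image f → b = c := by
    intro b hb c hc hbc
    ext x
    constructor
    · intro hx
      have : f x ∈ c.image f := hbc ▸ mem_image_of_mem f hx
      obtain ⟨y, hy, hyx⟩ := mem_image.1 this
      have : y = x := hf (hsub c hc hy) (hsub b hb hx) hyx
      exact this ▸ hy
    · intro hx
      have : f x ∈ b.image f := hbc ▸ mem_image_of_mem f hx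
      obtain ⟨y, hy, hyx⟩ := mem_image.1 this
      have : y = x := hf (hsub b hb hy) (hsub c hc hx) hyx
      exact this ▸ hy
  refine ⟨?_, ?_, ?_, ?_⟩
  · intro c hc
    obtain ⟨b, hb, rfl⟩ := mem_image.1 hc
    exact image_subset_image (hsub b hb)
  · intro c hc
    obtain ⟨b, hb, rfl⟩ := mem_image.1 hc
    rw [Finset.card_image_of_injOn (hf.mono (by exact_mod_cast hsub b hb))]
    exact hcard b hb
  · intro y hy
    obtain ⟨x, hx, rfl⟩ := mem_image.1 hy
    obtain ⟨b, ⟨hbP, hxb⟩, huniq⟩ := hcov x hx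
    refine ⟨b.image f, ⟨mem_image_of_mem _ hbP, mem_image_of_mem f hxb⟩, ?_⟩
    rintro c ⟨hcP, hfc⟩
    obtain ⟨b', hb', rfl⟩ := mem_image.1 hcP
    obtain ⟨x', hx', hfx⟩ := mem_image.1 hfc
    have hxx : x' = x := hf (hsub b' hb' hx') hx hfx
    subst hxx
    exact congrArg _ (huniq b' ⟨hb', hx'⟩)
  · rw [Finset.card_image_of_injOn (fun b hb c hc => hbinj b hb c hc), hk]

lemma pc_image (f : α → β) (s : Finset α) (hf : Set.InjOn f s) (k : ℕ) :
    pc s k = pc (s.image f) k := by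
  classical
  rw [pc, pc]
  refine Finset.card_bij' (fun P _ => P.image (fun b => b.image f))
      (fun Q _ => Q.image (fun c => s.filter (fun x => f x ∈ c))) ?_ ?_ ?_ ?_
  · intro P hP
    exact mem_pcset.2 ((mem_pcset.1 hP).image f hf)
  · intro Q hQ
    replace hQ := mem_pcset.1 hQ
    obtain ⟨hsub, hcard, hcov, hk⟩ := hQ
    -- each filter-block has image = the original block
    have key : ∀ c ∈ Q, (s.filter (fun x => f x ∈ c)).image f = c := by
      intro c hc
      apply Finset.Subset.antisymm
      · intro y hy
        obtain ⟨x, hx, rfl⟩ := mem_image.1 hy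
        exact (mem_filter.1 hx).2
      · intro y hy
        obtain ⟨x, hx, rfl⟩ := mem_image.1 (hsub c hc hy)
        exact mem_image_of_mem f (mem_filter.2 ⟨hx, hy⟩)
    have cardkey : ∀ c ∈ Q, (s.filter (fun x => f x ∈ c)).card = c.card := by
      intro c hc
      have h2 := Finset.card_image_of_injOn (s := s.filter (fun x => f x ∈ c))
        (hf.mono (by intro x hx; exact (mem_filter.1 hx).1))
      rw [key c hc] at h2
      exact h2.symm
    have blkinj : ∀ c ∈ Q, ∀ d ∈ Q,
        s.filter (fun x => f x ∈ c) = s.filter (fun x => f x ∈ d) → c = d := by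
      intro c hc d hd hcd
      rw [← key c hc, ← key d hd, hcd]
    apply mem_pcset.2
    refine ⟨?_, ?_, ?_, ?_⟩
    · intro b hb
      obtain ⟨c, hc, rfl⟩ := mem_image.1 hb
      exact filter_subset _ s
    · intro b hb
      obtain ⟨c, hc, rfl⟩ := mem_image.1 hb
      rw [cardkey c hc]
      exact hcard c hc
    · intro x hx
      obtain ⟨c, ⟨hcQ, hfc⟩, huniq⟩ := hcov (f x) (mem_image_of_mem f hx)
      refine ⟨s.filter (fun y => f y ∈ c), ⟨mem_image_of_mem _ hcQ,
        mem_filter.2 ⟨hx, hfc⟩⟩, ?_⟩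
      rintro b ⟨hbP, hxb⟩
      obtain ⟨d, hd, rfl⟩ := mem_image.1 hbP
      have : f x ∈ d := (mem_filter.1 hxb).2
      exact congrArg (fun b => s.filter (fun y => f y ∈ b)) (huniq d ⟨hd, this⟩)
    · rw [Finset.card_image_of_injOn (fun c hc d hd => blkinj c hc d hd), hk]
  · intro P hP
    replace hP := mem_pcset.1 hP
    obtain ⟨hsub, hcard, hcov, hk⟩ := hP
    show (P.image (fun b => b.image f)).image (fun c => s.filter (fun x => f x ∈ c)) = P
    rw [Finset.image_image]
    have : ∀ b ∈ P, s.filter (fun x => f x ∈ b.image f) = b := by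
      intro b hb
      ext x
      simp only [mem_filter, mem_image]
      constructor
      · rintro ⟨hxs, y, hy, hyx⟩
        have : y = x := hf (hsub b hb hy) hxs hyx
        exact this ▸ hy
      · intro hx
        exact ⟨hsub b hb hx, x, hx, rfl⟩
    calc P.image _ = P.image id := Finset.image_congr (fun b hb => this b hb)
      _ = P := Finset.image_id
  · intro Q hQ
    replace hQ := mem_pcset.1 hQ
    obtain ⟨hsub, hcard, hcov, hk⟩ := hQ
    have key : ∀ c ∈ Q, (s.filter (fun x => f x ∈ c)).image f = c := by
      intro c hc
      apply Finset.Subset.antisymm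
      · intro y hy
        obtain ⟨x, hx, rfl⟩ := mem_image.1 hy
        exact (mem_filter.1 hx).2
      · intro y hy
        obtain ⟨x, hx, rfl⟩ := mem_image.1 (hsub c hc hy)
        exact mem_image_of_mem f (mem_filter.2 ⟨hx, hy⟩)
    show (Q.image (fun c => s.filter (fun x => f x ∈ c))).image (fun b => b.image f) = Q
    rw [Finset.image_image]
    calc Q.image _ = Q.image id := Finset.image_congr (fun c hc => key c hc)
      _ = Q := Finset.image_id

lemma pc_eq_of_card_eq {s t : Finset ℕ} (h : s.card = t.card) (k : ℕ) :
    pc s k = pc t k := by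
  classical
  have e := Finset.equivOfCardEq h
  set f : ℕ → ℕ := fun x => if hx : x ∈ s then (e ⟨x, hx⟩ : ℕ) else 0 with hfdef
  have hfval : ∀ x (hx : x ∈ s), f x = (e ⟨x, hx⟩ : ℕ) := by
    intro x hx; simp [hfdef, hx]
  have hinj : Set.InjOn f s := by
    intro x hx y hy hxy
    rw [hfval x hx, hfval y hy] at hxy
    have : e ⟨x, hx⟩ = e ⟨y, hy⟩ := Subtype.ext hxy
    exact congrArg Subtype.val (e.injective this)
  have himg : s.image f = t := by
    apply Finset.Subset.antisymm
    · intro y hy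
      obtain ⟨x, hx, rfl⟩ := mem_image.1 hy
      rw [hfval x hx]
      exact (e ⟨x, hx⟩).2
    · intro y hy
      obtain ⟨x, hx⟩ := e.surjective ⟨y, hy⟩
      refine mem_image.2 ⟨x, x.2, ?_⟩
      rw [hfval x x.2, Subtype.coe_eta, hx]
  rw [pc_image f s hinj k, himg]

lemma besselB_eq_pc (n k : ℕ) : besselB n k = pc (Finset.range n) k := by
  classical
  have h1 : (Finset.univ : Finset (Fin n)).image Fin.val = Finset.range n := by
    rw [← Nat.Iio_eq_range, ← Fin.map_valEmbedding_univ, Finset.map_eq_image]; rfl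
  have h2 : pc (Finset.univ : Finset (Fin n)) k = pc (Finset.range n) k := by
    rw [pc_image Fin.val Finset.univ (Fin.val_injective.injOn) k, h1]
  rw [← h2, besselB, Nat.card_eq_fintype_card, Fintype.card_subtype, pc]
  apply Finset.card_nbij' id id
  · intro P hP
    simp only [mem_coe, mem_filter, mem_univ, true_and] at hP
    simp only [id, mem_coe]
    refine mem_pcset.2 ⟨fun b _ => b.subset_univ, hP.1, fun i _ => hP.2.1 i, hP.2.2⟩
  · intro P hP
    simp only [mem_coe] at hP
    replace hP := mem_pcset.1 hP
    simp only [id, mem_coe, mem_filter, mem_univ, true_and]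
    exact ⟨hP.2.1, fun i => hP.2.2.1 i (mem_univ i), hP.2.2.2⟩
  · intro P _; rfl
  · intro P _; rfl

lemma pc_empty_zero : pc (∅ : Finset α) 0 = 1 := by
  classical
  rw [pc]
  have : (∅ : Finset α).powerset.powerset.filter (IsPP ∅ 0) = {∅} := by
    ext P
    rw [mem_pcset, mem_singleton]
    constructor
    · rintro ⟨hsub, hcard, _, hk⟩
      ext b
      simp only [Finset.notMem_empty, iff_false]
      intro hb
      have h1 := hsub b hb
      have h2 := hcard b hb
      rw [Finset.subset_empty] at h1
      subst h1
      simp at h2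
    · rintro rfl
      exact ⟨by simp, by simp, by simp, by simp⟩
  rw [this, card_singleton]

lemma pc_zero_of_nonempty {s : Finset α} (hs : s.Nonempty) : pc s 0 = 0 := by
  classical
  rw [pc, Finset.card_eq_zero, Finset.filter_eq_empty_iff]
  intro P _ hP
  obtain ⟨hsub, hcard, hcov, hk⟩ := hP
  obtain ⟨i, hi⟩ := hs
  obtain ⟨b, ⟨hbP, _⟩, _⟩ := hcov i hi
  rw [Finset.card_eq_zero] at hk
  subst hk
  exact absurd hbP (Finset.notMem_empty b)

lemma pc_eq_zero_of_card_lt {s : Finset α} {k : ℕ} (h : s.card < k) : pc s k = 0 := by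
  classical
  rw [pc, Finset.card_eq_zero, Finset.filter_eq_empty_iff]
  intro P _ hP
  obtain ⟨hsub, hcard, hcov, hk⟩ := hP
  have hdisj : ∀ b ∈ P, ∀ c ∈ P, b ≠ c → Disjoint b c := by
    intro b hb c hc hbc
    rw [Finset.disjoint_left]
    intro i hib hic
    exact hbc (((hcov i (hsub b hb hib)).unique ⟨hb, hib⟩ ⟨hc, hic⟩))
  have h1 : (P.biUnion id).card = ∑ b ∈ P, b.card := Finset.card_biUnion hdisj
  have h2 : P.biUnion id ⊆ s := by
    intro i hi
    obtain ⟨b, hb, hib⟩ := Finset.mem_biUnion.1 hi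
    exact hsub b hb hib
  have h3 : P.card ≤ ∑ b ∈ P, b.card := by
    calc P.card = ∑ _b ∈ P, 1 := by simp
    _ ≤ ∑ b ∈ P, b.card := Finset.sum_le_sum (by
        intro b hb
        rcases hcard b hb with h | h <;> omega)
  have := Finset.card_le_card h2
  omega

lemma pc_insert {a : α} {s : Finset α} (ha : a ∉ s) (k : ℕ) :
    pc (insert a s) (k + 1) = pc s k + ∑ x ∈ s, pc (s.erase x) k := by
  classical
  rw [pc]
  set t := insert a s with ht
  set F := t.powerset.powerset.filter (IsPP t (k+1)) with hF
  have key_uniq : ∀ {P : Finset (Finset α)}, IsPP t (k+1) P →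
      ∀ {i}, i ∈ t → ∀ {b}, b ∈ P → i ∈ b → ∀ {c}, c ∈ P → i ∈ c → b = c := by
    intro P hP i hi b hb hib c hc hic
    exact (hP.2.2.1 i hi).unique ⟨hb, hib⟩ ⟨hc, hic⟩
  have hat : a ∈ t := mem_insert_self a s
  have hst : s ⊆ t := subset_insert a s
  -- split by whether {a} is a block
  have hsplit : F.card = (F.filter (fun P => {a} ∈ P)).card
      + (F.filter (fun P => ¬ ({a} ∈ P))).card :=
    (Finset.card_filter_add_card_filter_not _).symm
  rw [hsplit]
  congr 1
  -- Part 1: {a} singleton block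
  · rw [pc]
    refine Finset.card_bij' (fun P _ => P.erase {a}) (fun Q _ => insert {a} Q) ?_ ?_ ?_ ?_
    · intro P hP
      rw [mem_filter] at hP
      obtain ⟨hPF, haP⟩ := hP
      rw [hF, mem_pcset] at hPF
      obtain ⟨hsub, hcard, hcov, hk⟩ := hPF
      have hblock : ∀ b ∈ P, a ∈ b → b = {a} := by
        intro b hb hab
        exact key_uniq ⟨hsub, hcard, hcov, hk⟩ hat hb hab haP (mem_singleton_self a)
      rw [mem_pcset]
      refine ⟨?_, ?_, ?_, ?_⟩
      · intro b hb
        obtain ⟨hbne, hbP⟩ := Finset.mem_erase.1 hb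
        intro i hib
        have hit : i ∈ t := hsub b hbP hib
        rcases Finset.mem_insert.1 hit with rfl | his
        · exact absurd (hblock b hbP hib) hbne
        · exact his
      · intro b hb
        exact hcard b (Finset.mem_erase.1 hb).2
      · intro i hi
        obtain ⟨b, ⟨hbP, hib⟩, huniq⟩ := hcov i (hst hi)
        have hbne : b ≠ {a} := by
          rintro rfl
          rw [mem_singleton] at hib
          exact ha (hib ▸ hi)
        refine ⟨b, ⟨Finset.mem_erase.2 ⟨hbne, hbP⟩, hib⟩, ?_⟩
        rintro c ⟨hcP, hic⟩
        exact huniq c ⟨(Finset.mem_erase.1 hcP).2, hic⟩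
      · rw [Finset.card_erase_of_mem haP, hk]; omega
    · intro Q hQ
      rw [mem_pcset] at hQ
      obtain ⟨hsub, hcard, hcov, hk⟩ := hQ
      have haQ : {a} ∉ Q := by
        intro haQ
        exact ha (hsub _ haQ (mem_singleton_self a))
      rw [mem_filter]
      constructor
      · rw [hF, mem_pcset]
        refine ⟨?_, ?_, ?_, ?_⟩
        · intro b hb
          rcases Finset.mem_insert.1 hb with rfl | hbQ
          · intro i hi; rw [mem_singleton] at hi; exact hi ▸ hat
          · exact (hsub b hbQ).trans hst
        · intro b hb
          rcases Finset.mem_insert.1 hb with rfl | hbQ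
          · left; exact card_singleton a
          · exact hcard b hbQ
        · intro i hi
          rcases Finset.mem_insert.1 hi with rfl | his
          · refine ⟨{i}, ⟨mem_insert_self _ _, mem_singleton_self i⟩, ?_⟩
            rintro b ⟨hbP, hib⟩
            rcases Finset.mem_insert.1 hbP with rfl | hbQ
            · rfl
            · exact absurd (hsub b hbQ hib) ha
          · obtain ⟨b, ⟨hbQ, hib⟩, huniq⟩ := hcov i his
            refine ⟨b, ⟨mem_insert_of_mem hbQ, hib⟩, ?_⟩
            rintro c ⟨hcP, hic⟩
            rcases Finset.mem_insert.1 hcP with rfl | hcQ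
            · rw [mem_singleton] at hic; exact absurd (hic ▸ his) ha
            · exact huniq c ⟨hcQ, hic⟩
        · rw [Finset.card_insert_of_notMem haQ, hk]
      · exact mem_insert_self _ _
    · intro P hP
      exact Finset.insert_erase (Finset.mem_filter.1 hP).2
    · intro Q hQ
      apply Finset.erase_insert
      rw [mem_pcset] at hQ
      intro haQ
      exact ha (hQ.1 _ haQ (mem_singleton_self a))
  -- Part 2: block {a, x}
  · have hdecomp : F.filter (fun P => ¬ ({a} ∈ P)) =
        s.biUnion (fun x => F.filter (fun P => {a, x} ∈ P)) := by
      ext P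
      simp only [Finset.mem_biUnion, mem_filter]
      constructor
      · rintro ⟨hPF, haP⟩
        have hPP : IsPP t (k+1) P := by rw [hF, mem_pcset] at hPF; exact hPF
        obtain ⟨hsub, hcard, hcov, hk⟩ := hPP
        obtain ⟨b, ⟨hbP, hab⟩, _⟩ := hcov a hat
        rcases hcard b hbP with h1 | h2
        · obtain ⟨y, rfl⟩ := Finset.card_eq_one.1 h1
          rw [mem_singleton] at hab
          exact absurd (hab ▸ hbP) haP
        · have hea : (b.erase a).card = 1 := by
            rw [Finset.card_erase_of_mem hab, h2]
          obtain ⟨x, hx⟩ := Finset.card_eq_one.1 hea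
          have hbeq : b = {a, x} := by
            rw [← Finset.insert_erase hab, hx]
          have hxb : x ∈ b := (hx ▸ Finset.erase_subset a b) (mem_singleton_self x)
          have hxea : x ∈ b.erase a := hx ▸ mem_singleton_self x
          have hxa : x ≠ a := (Finset.mem_erase.1 hxea).1
          have hxs : x ∈ s := by
            rcases Finset.mem_insert.1 (hsub b hbP hxb) with h | h
            · exact absurd h hxa
            · exact h
          exact ⟨x, hxs, hPF, hbeq ▸ hbP⟩
      · rintro ⟨x, hxs, hPF, haxP⟩
        refine ⟨hPF, ?_⟩
        intro haP
        have hPP : IsPP t (k+1) P := by rw [hF, mem_pcset] at hPF; exact hPF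
        have hax : a ∈ ({a, x} : Finset α) := mem_insert_self a _
        have heq : ({a} : Finset α) = {a, x} :=
          key_uniq hPP hat haP (mem_singleton_self a) haxP hax
        have hxax : x ∈ ({a, x} : Finset α) := mem_insert_of_mem (mem_singleton_self x)
        rw [← heq, mem_singleton] at hxax
        exact ha (hxax ▸ hxs)
    rw [hdecomp, Finset.card_biUnion]
    · apply Finset.sum_congr rfl
      intro x hxs
      have hxa : x ≠ a := by rintro rfl; exact ha hxs
      have hax2 : ({a, x} : Finset α).card = 2 := by
        rw [Finset.card_insert_of_notMem (by simp [Ne.symm hxa]), card_singleton]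
      rw [pc]
      refine Finset.card_bij' (fun P _ => P.erase {a, x}) (fun R _ => insert {a, x} R) ?_ ?_ ?_ ?_
      · intro P hP
        rw [mem_filter] at hP
        obtain ⟨hPF, haxP⟩ := hP
        have hPP : IsPP t (k+1) P := by rw [hF, mem_pcset] at hPF; exact hPF
        obtain ⟨hsub, hcard, hcov, hk⟩ := hPP
        have hax : a ∈ ({a, x} : Finset α) := mem_insert_self a _
        have hxax : x ∈ ({a, x} : Finset α) := mem_insert_of_mem (mem_singleton_self x)
        have hblocka : ∀ b ∈ P, a ∈ b → b = {a, x} := fun b hb hab =>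
          key_uniq ⟨hsub, hcard, hcov, hk⟩ hat hb hab haxP hax
        have hblockx : ∀ b ∈ P, x ∈ b → b = {a, x} := fun b hb hxb =>
          key_uniq ⟨hsub, hcard, hcov, hk⟩ (hst hxs) hb hxb haxP hxax
        rw [mem_pcset]
        refine ⟨?_, ?_, ?_, ?_⟩
        · intro b hb
          obtain ⟨hbne, hbP⟩ := Finset.mem_erase.1 hb
          intro i hib
          rcases Finset.mem_insert.1 (hsub b hbP hib) with rfl | his
          · exact absurd (hblocka b hbP hib) hbne
          · refine Finset.mem_erase.2 ⟨?_, his⟩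
            rintro rfl
            exact hbne (hblockx b hbP hib)
        · intro b hb
          exact hcard b (Finset.mem_erase.1 hb).2
        · intro i hi
          obtain ⟨hix, his⟩ := Finset.mem_erase.1 hi
          obtain ⟨b, ⟨hbP, hib⟩, huniq⟩ := hcov i (hst his)
          have hbne : b ≠ {a, x} := by
            rintro rfl
            rcases Finset.mem_insert.1 hib with rfl | h
            · exact ha his
            · rw [mem_singleton] at h; exact hix h
          refine ⟨b, ⟨Finset.mem_erase.2 ⟨hbne, hbP⟩, hib⟩, ?_⟩
          rintro c ⟨hcP, hic⟩
          exact huniq c ⟨(Finset.mem_erase.1 hcP).2, hic⟩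
        · rw [Finset.card_erase_of_mem haxP, hk]; omega
      · intro R hR
        rw [mem_pcset] at hR
        obtain ⟨hsub, hcard, hcov, hk⟩ := hR
        have hsub' : ∀ b ∈ R, b ⊆ s := fun b hb => (hsub b hb).trans (Finset.erase_subset x s)
        have haxR : {a, x} ∉ R := by
          intro h
          exact ha (hsub' _ h (mem_insert_self a _))
        rw [mem_filter]
        refine ⟨?_, mem_insert_self _ _⟩
        rw [hF, mem_pcset]
        refine ⟨?_, ?_, ?_, ?_⟩
        · intro b hb
          rcases Finset.mem_insert.1 hb with rfl | hbR
          · intro i hi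
            rcases Finset.mem_insert.1 hi with rfl | h
            · exact hat
            · rw [mem_singleton] at h; exact h ▸ hst hxs
          · exact (hsub' b hbR).trans hst
        · intro b hb
          rcases Finset.mem_insert.1 hb with rfl | hbR
          · right; exact hax2
          · exact hcard b hbR
        · intro i hi
          have hnotR : ∀ b ∈ R, a ∉ b := fun b hb h => ha (hsub' b hb h)
          have hnotRx : ∀ b ∈ R, x ∉ b := fun b hb h => Finset.notMem_erase x s (hsub b hb h)
          rcases Finset.mem_insert.1 hi with rfl | his
          · refine ⟨{i, x}, ⟨mem_insert_self _ _, mem_insert_self i _⟩, ?_⟩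
            rintro c ⟨hcP, hic⟩
            rcases Finset.mem_insert.1 hcP with rfl | hcR
            · rfl
            · exact absurd hic (hnotR c hcR)
          · by_cases hix : i = x
            · subst hix
              refine ⟨{a, i}, ⟨mem_insert_self _ _, mem_insert_of_mem (mem_singleton_self i)⟩, ?_⟩
              rintro c ⟨hcP, hic⟩
              rcases Finset.mem_insert.1 hcP with rfl | hcR
              · rfl
              · exact absurd hic (hnotRx c hcR)
            · obtain ⟨b, ⟨hbR, hib⟩, huniq⟩ := hcov i (Finset.mem_erase.2 ⟨hix, his⟩)
              refine ⟨b, ⟨mem_insert_of_mem hbR, hib⟩, ?_⟩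
              rintro c ⟨hcP, hic⟩
              rcases Finset.mem_insert.1 hcP with rfl | hcR
              · rcases Finset.mem_insert.1 hic with rfl | h
                · exact absurd his ha
                · rw [mem_singleton] at h; exact absurd h hix
              · exact huniq c ⟨hcR, hic⟩
        · rw [Finset.card_insert_of_notMem haxR, hk]
      · intro P hP
        exact Finset.insert_erase (Finset.mem_filter.1 hP).2
      · intro R hR
        apply Finset.erase_insert
        rw [mem_pcset] at hR
        intro h
        exact ha ((hR.1 _ h).trans (Finset.erase_subset x s) (mem_insert_self a _))
    · -- disjointness
      intro x hx y hy hxy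
      rw [Function.onFun, Finset.disjoint_left]
      intro P hPx hPy
      rw [mem_filter] at hPx hPy
      have hPP : IsPP t (k+1) P := by
        have := hPx.1; rw [hF, mem_pcset] at this; exact this
      have heq : ({a, x} : Finset α) = {a, y} :=
        key_uniq hPP hat hPx.2 (mem_insert_self a _) hPy.2 (mem_insert_self a _)
      have : x ∈ ({a, y} : Finset α) := heq ▸ mem_insert_of_mem (mem_singleton_self x)
      rcases Finset.mem_insert.1 this with rfl | h
      · exact ha hx
      · rw [mem_singleton] at h; exact hxy h

lemma besselB_rec (n k : ℕ) :
    besselB (n + 2) (k + 1) = besselB (n + 1) k + (n + 1) * besselB n k := by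
  classical
  rw [besselB_eq_pc, besselB_eq_pc, besselB_eq_pc]
  have h1 : Finset.range (n + 2) = insert (n + 1) (Finset.range (n + 1)) :=
    Finset.range_add_one
  have h2 : (n + 1) ∉ Finset.range (n + 1) := by simp
  rw [h1, pc_insert h2 k]
  congr 1
  have h3 : ∀ x ∈ Finset.range (n + 1),
      pc ((Finset.range (n + 1)).erase x) k = pc (Finset.range n) k := by
    intro x hx
    apply pc_eq_of_card_eq
    rw [Finset.card_erase_of_mem hx, Finset.card_range, Finset.card_range]
    omega
  rw [Finset.sum_congr rfl h3, Finset.sum_const, Finset.card_range, smul_eq_mul]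

lemma besselB_zero_zero : besselB 0 0 = 1 := by
  rw [besselB_eq_pc]
  simpa using pc_empty_zero (α := ℕ)

lemma besselB_succ_zero (n : ℕ) : besselB (n + 1) 0 = 0 := by
  rw [besselB_eq_pc]
  exact pc_zero_of_nonempty (by simp)

lemma besselB_zero_of_lt {n k : ℕ} (h : n < k) : besselB n k = 0 := by
  rw [besselB_eq_pc]
  exact pc_eq_zero_of_card_lt (by simpa using h)

lemma besselB_one_one : besselB 1 1 = 1 := by
  rw [besselB_eq_pc]
  have : Finset.range 1 = insert 0 (∅ : Finset ℕ) := rfl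
  rw [this, pc_insert (by simp) 0]
  simp [pc_empty_zero]

lemma Bq_rec (n k : ℕ) : (besselB (n + 2) (k + 1) : ℚ)
    = (besselB (n + 1) k : ℚ) + ((n : ℚ) + 1) * (besselB n k : ℚ) := by
  rw [besselB_rec]
  push_cast
  ring

lemma Bq_iB : ∀ m i : ℕ, 2 * ((i : ℚ) + 1) * (besselB (m + 2) (i + 1) : ℚ)
    = 2 * ((m : ℚ) + 2) * (besselB (m + 1) i : ℚ)
      + ((m : ℚ) + 2) * ((m : ℚ) + 1) * (besselB m i : ℚ) := by
  intro m
  induction m using Nat.strong_induction_on with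
  | _ m ih =>
    match m with
    | 0 =>
      intro i
      match i with
      | 0 =>
        have h1 : besselB 2 1 = 1 := by
          rw [besselB_rec, besselB_succ_zero, besselB_zero_zero]
        rw [h1, besselB_succ_zero, besselB_zero_zero]
        norm_num
      | 1 =>
        have h1 : besselB 2 2 = 1 := by
          rw [besselB_rec, besselB_one_one, besselB_zero_of_lt (by omega)]
        rw [h1, besselB_one_one, besselB_zero_of_lt (show 0 < 1 by omega)]
        norm_num
      | (i+2) =>
        rw [besselB_zero_of_lt (show 2 < i + 3 by omega),
          besselB_zero_of_lt (show 1 < i + 2 by omega),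
          besselB_zero_of_lt (show 0 < i + 2 by omega)]
        ring
    | 1 =>
      intro i
      have hB21 : besselB 2 1 = 1 := by
        rw [besselB_rec, besselB_succ_zero, besselB_zero_zero]
      have hB22 : besselB 2 2 = 1 := by
        rw [besselB_rec, besselB_one_one, besselB_zero_of_lt (by omega)]
      match i with
      | 0 =>
        have h1 : besselB 3 1 = 0 := by
          rw [besselB_rec, besselB_succ_zero, besselB_succ_zero]
        rw [h1, besselB_succ_zero, besselB_succ_zero]
        ring
      | 1 =>
        have h1 : besselB 3 2 = 3 := by
          rw [besselB_rec, hB21, besselB_one_one]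
        rw [h1, hB21, besselB_one_one]
        norm_num
      | 2 =>
        have h1 : besselB 3 3 = 1 := by
          rw [besselB_rec, hB22, besselB_zero_of_lt (by omega)]
        rw [h1, hB22, besselB_zero_of_lt (show 1 < 2 by omega)]
        norm_num
      | (i+3) =>
        rw [besselB_zero_of_lt (show 3 < i + 4 by omega),
          besselB_zero_of_lt (show 2 < i + 3 by omega),
          besselB_zero_of_lt (show 1 < i + 3 by omega)]
        ring
    | (p+2) =>
      intro i
      match i with
      | 0 =>
        have h1 : besselB (p + 4) 1 = 0 := by
          rw [show p + 4 = (p + 2) + 2 by ring, besselB_rec,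
            besselB_succ_zero, besselB_succ_zero]
          ring
        rw [h1, besselB_succ_zero, besselB_succ_zero]
        ring
      | (j+1) =>
        have rec0 : (besselB (p+4) (j+2) : ℚ)
            = (besselB (p+3) (j+1) : ℚ) + ((p : ℚ) + 3) * (besselB (p+2) (j+1) : ℚ) := by
          have := Bq_rec (p+2) (j+1)
          push_cast at this ⊢
          convert this using 3 <;> ring
        have h1 := ih (p+1) (by omega) j
        have h2 : (besselB (p+3) (j+1) : ℚ)
            = (besselB (p+2) j : ℚ) + ((p : ℚ) + 2) * (besselB (p+1) j : ℚ) := by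
          have := Bq_rec (p+1) j
          push_cast at this ⊢
          convert this using 3 <;> ring
        have h3 := ih p (by omega) j
        have h4 := Bq_rec p j
        push_cast at h1 h2 h3 h4 ⊢
        linear_combination (2*((j:ℚ)+2))*rec0 + h1 - 2*((p:ℚ)+3)*h2
          + ((p:ℚ)+3)*h3 - ((p:ℚ)+3)*((p:ℚ)+2)*h4

lemma besselb_zero_zero : besselb 0 0 = 1 := by simp [besselb]

lemma besselb_succ_zero (k : ℕ) : besselb (k + 1) 0 = 0 := by
  simp [besselb]

lemma besselb_zero_of_lt {k l : ℕ} (h : k < l) : besselb k l = 0 := by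
  rw [besselb, if_neg (by omega), if_neg (by omega)]

lemma besselb_diag (k : ℕ) : besselb k k = 1 := by
  match k with
  | 0 => exact besselb_zero_zero
  | (k+1) =>
    rw [besselb, if_neg (by omega), if_pos (by omega), aQ]
    have h1 : 2 * (k + 1) - (k + 1) - 1 = k := by omega
    have h2 : (k + 1) - (k + 1) = 0 := by omega
    have h3 : (k + 1) - 1 = k := by omega
    rw [h1, h2, h3]
    have : (Nat.factorial k : ℚ) ≠ 0 := Nat.cast_ne_zero.2 (Nat.factorial_ne_zero k)
    field_simp
    simp

lemma factorial_q_ne (n : ℕ) : (Nat.factorial n : ℚ) ≠ 0 :=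
  Nat.cast_ne_zero.2 (Nat.factorial_ne_zero n)

lemma besselb_rec (k l : ℕ) :
    besselb (k + 1) (l + 1)
      = besselb k l - (2 * (k : ℚ) - ((l : ℚ) + 1)) * besselb k (l + 1) := by
  rcases lt_or_ge k (l + 1) with hlt | hge
  · -- l + 1 > k
    rcases Nat.eq_or_lt_of_le hlt with heq | hlt'
    · -- k = l? hlt : k < l+1 ; heq : k + ... careful
      have hkl : k = l := by omega
      subst hkl
      rw [besselb_diag, besselb_diag, besselb_zero_of_lt (by omega)]
      ring
    · have h1 : besselb (k + 1) (l + 1) = 0 := besselb_zero_of_lt (by omega)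
      have h2 : besselb k l = 0 := besselb_zero_of_lt (by omega)
      have h3 : besselb k (l + 1) = 0 := besselb_zero_of_lt (by omega)
      rw [h1, h2, h3]
      ring
  · -- l + 1 ≤ k
    match l, hge with
    | 0, hge =>
      -- k ≥ 1
      obtain ⟨e, rfl⟩ : ∃ e, k = e + 1 := ⟨k - 1, by omega⟩
      rw [besselb_succ_zero]
      rw [besselb, if_neg (by omega), if_pos (by omega), aQ,
        besselb, if_neg (by omega), if_pos (by omega), aQ]
      have h1 : 2 * (e + 1 + 1) - 1 - 1 = 2 * e + 2 := by omega
      have h2 : (e + 1 + 1) - 1 = e + 1 := by omega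
      have h3 : (1 : ℕ) - 1 = 0 := by omega
      have h4 : 2 * (e + 1) - 1 - 1 = 2 * e := by omega
      have h5 : (e + 1) - 1 = e := by omega
      rw [h1, h2, h3, h4, h5]
      have e1 : Nat.factorial (2 * e + 2) = (2 * e + 2) * ((2 * e + 1) * Nat.factorial (2 * e)) := by
        rw [show 2*e+2 = (2*e+1)+1 by ring, Nat.factorial_succ, Nat.factorial_succ]
      have e2 : Nat.factorial (e + 1) = (e + 1) * Nat.factorial e := Nat.factorial_succ e
      rw [e1, e2]
      have q1 := factorial_q_ne (2 * e)
      have q2 := factorial_q_ne e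
      push_cast
      rw [pow_succ]
      field_simp
      ring
    | (m+1), hge =>
      -- k ≥ m + 2 ; set k = m + 2 + e
      obtain ⟨e, rfl⟩ : ∃ e, k = m + 2 + e := ⟨k - (m+2), by omega⟩
      rw [besselb, if_neg (by omega), if_pos (by omega), aQ,
        besselb, if_neg (by omega), if_pos (by omega), aQ,
        besselb, if_neg (by omega), if_pos (by omega), aQ]
      have h1 : 2 * (m + 2 + e + 1) - (m + 1 + 1) - 1 = m + 2 * e + 3 := by omega
      have h2 : (m + 2 + e + 1) - (m + 1 + 1) = e + 1 := by omega
      have h3 : (m + 1 + 1) - 1 = m + 1 := by omega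
      have h4 : 2 * (m + 2 + e) - (m + 1) - 1 = m + 2 * e + 2 := by omega
      have h5 : (m + 2 + e) - (m + 1) = e + 1 := by omega
      have h6 : (m + 1) - 1 = m := by omega
      have h7 : 2 * (m + 2 + e) - (m + 1 + 1) - 1 = m + 2 * e + 1 := by omega
      have h8 : (m + 2 + e) - (m + 1 + 1) = e := by omega
      rw [h1, h2, h3, h4, h5, h6, h7, h8]
      have e1 : Nat.factorial (m + 2 * e + 3)
          = (m + 2 * e + 3) * ((m + 2 * e + 2) * Nat.factorial (m + 2 * e + 1)) := by
        rw [show m+2*e+3 = (m+2*e+2)+1 by ring, Nat.factorial_succ,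
          show m+2*e+2 = (m+2*e+1)+1 by ring, Nat.factorial_succ]
      have e2 : Nat.factorial (m + 2 * e + 2) = (m + 2 * e + 2) * Nat.factorial (m + 2 * e + 1) := by
        rw [show m+2*e+2 = (m+2*e+1)+1 by ring, Nat.factorial_succ]
      have e3 : Nat.factorial (e + 1) = (e + 1) * Nat.factorial e := Nat.factorial_succ e
      have e4 : Nat.factorial (m + 1) = (m + 1) * Nat.factorial m := Nat.factorial_succ m
      rw [e1, e2, e3, e4]
      have q1 := factorial_q_ne (m + 2 * e + 1)
      have q2 := factorial_q_ne e
      have q3 := factorial_q_ne m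
      push_cast
      rw [pow_succ, pow_succ]
      field_simp
      ring

/-- closed form of the auxiliary sum `T(m,l) = Σ_j B(m,j) b(j+1,l)` -/
noncomputable def tT (m l : ℕ) : ℚ :=
  if 1 ≤ l ∧ l ≤ m + 1 then
    (-1 : ℚ) ^ (m + 1 - l) * (Nat.factorial m : ℚ) / (Nat.factorial (l - 1) : ℚ)
  else 0

lemma tT_zero_left (m : ℕ) : tT m 0 = 0 := by simp [tT]

lemma tT_zero_of_lt {m l : ℕ} (h : m + 1 < l) : tT m l = 0 := by
  rw [tT, if_neg (by omega)]

lemma tT_of_le {m l' : ℕ} (h : l' ≤ m) :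
    tT m (l' + 1) = (-1 : ℚ) ^ (m - l') * (Nat.factorial m : ℚ) / (Nat.factorial l' : ℚ) := by
  rw [tT, if_pos (by omega)]
  have e1 : m + 1 - (l' + 1) = m - l' := by omega
  have e2 : l' + 1 - 1 = l' := by omega
  rw [e1, e2]

lemma tT_zero_eq : tT 0 1 = 1 := by norm_num [tT, Nat.factorial]

lemma tT_eq_besselb_one (l : ℕ) : tT 0 l = besselb 1 l := by
  match l with
  | 0 => rw [tT_zero_left, besselb_succ_zero]
  | 1 => rw [tT_zero_eq, besselb_diag]
  | (l+2) => rw [tT_zero_of_lt (by omega), besselb_zero_of_lt (by omega)]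

lemma besselb_two_one : besselb 2 1 = -1 := by
  rw [besselb, if_neg (by omega), if_pos (by omega), aQ]
  norm_num [Nat.factorial]

lemma tT_one_eq (l : ℕ) : tT 1 l = besselb 2 l := by
  match l with
  | 0 => rw [tT_zero_left, besselb_succ_zero]
  | 1 =>
    rw [besselb_two_one, tT_of_le (by omega)]
    norm_num [Nat.factorial]
  | 2 =>
    rw [besselb_diag, tT_of_le (by omega)]
    norm_num [Nat.factorial]
  | (l+3) => rw [tT_zero_of_lt (by omega), besselb_zero_of_lt (by omega)]

lemma tT_I1 (m l : ℕ) :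
    tT (m + 1) l + ((m : ℚ) + 1) * tT m l = if m + 2 = l then 1 else 0 := by
  match l with
  | 0 => rw [tT_zero_left, tT_zero_left, if_neg (by omega)]; ring
  | (l'+1) =>
    rcases lt_trichotomy l' (m + 1) with hlt | heq | hgt
    · -- l' ≤ m
      have h1 : l' ≤ m := by omega
      obtain ⟨d, rfl⟩ : ∃ d, m = l' + d := ⟨m - l', by omega⟩
      rw [tT_of_le (by omega), tT_of_le (by omega), if_neg (by omega)]
      have e1 : l' + d + 1 - l' = d + 1 := by omega
      have e2 : l' + d - l' = d := by omega
      rw [e1, e2, show l' + d + 1 = (l' + d) + 1 by ring, Nat.factorial_succ]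
      have q1 := factorial_q_ne l'
      push_cast
      rw [pow_succ]
      field_simp
      ring
    · -- l' = m + 1
      subst heq
      rw [tT_of_le (by omega), tT_zero_of_lt (by omega), if_pos (by omega)]
      have e1 : m + 1 - (m + 1) = 0 := by omega
      rw [e1, pow_zero]
      have q1 := factorial_q_ne (m + 1)
      field_simp
      ring
    · rw [tT_zero_of_lt (by omega), tT_zero_of_lt (by omega), if_neg (by omega)]
      ring

lemma tT_I2 (m l' : ℕ) :
    tT (m + 2) (l' + 1)
      = (if m + 2 = l' then 1 else 0) + ((l' : ℚ) + 1) * (if m + 2 = l' + 1 then 1 else 0)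
        - 2 * ((m : ℚ) + 2) * tT (m + 1) (l' + 1)
        - ((m : ℚ) + 2) * ((m : ℚ) + 1) * tT m (l' + 1) := by
  rcases lt_trichotomy l' (m + 1) with hlt | heq | hgt
  · -- l' ≤ m
    obtain ⟨d, rfl⟩ : ∃ d, m = l' + d := ⟨m - l', by omega⟩
    rw [tT_of_le (by omega), tT_of_le (by omega), tT_of_le (by omega),
      if_neg (by omega), if_neg (by omega)]
    have e1 : l' + d + 2 - l' = d + 2 := by omega
    have e2 : l' + d + 1 - l' = d + 1 := by omega
    have e3 : l' + d - l' = d := by omega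
    rw [e1, e2, e3, show l' + d + 2 = (l' + d + 1) + 1 by ring, Nat.factorial_succ,
      show l' + d + 1 = (l' + d) + 1 by ring, Nat.factorial_succ]
    have q1 := factorial_q_ne l'
    push_cast
    rw [pow_succ, pow_succ]
    field_simp
    ring
  · -- l' = m + 1
    subst heq
    rw [tT_of_le (by omega), tT_of_le (by omega), tT_zero_of_lt (by omega),
      if_neg (by omega), if_pos (by omega)]
    have e1 : m + 2 - (m + 1) = 1 := by omega
    have e2 : m + 1 - (m + 1) = 0 := by omega
    rw [e1, e2, pow_one, pow_zero, show m + 2 = (m + 1) + 1 by ring, Nat.factorial_succ]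
    have q1 := factorial_q_ne (m + 1)
    push_cast
    field_simp
    ring
  · rcases Nat.eq_or_lt_of_le hgt with heq2 | hgt2
    · -- l' = m + 2
      have : l' = m + 2 := by omega
      subst this
      rw [tT_of_le (by omega), tT_zero_of_lt (by omega), tT_zero_of_lt (by omega),
        if_pos rfl, if_neg (by omega)]
      have e2 : m + 2 - (m + 2) = 0 := by omega
      rw [e2, pow_zero]
      have q1 := factorial_q_ne (m + 2)
      field_simp
      ring
    · rw [tT_zero_of_lt (by omega), tT_zero_of_lt (by omega), tT_zero_of_lt (by omega),
        if_neg (by omega), if_neg (by omega)]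
      ring

lemma main_sum : ∀ n : ℕ,
    (∀ l, (∑ k ∈ Finset.range (n + 1), (besselB n k : ℚ) * besselb k l)
        = if n = l then 1 else 0)
      ∧ (∀ l, (∑ k ∈ Finset.range (n + 1), (besselB n k : ℚ) * besselb (k + 1) l)
        = tT n l) := by
  intro n
  induction n using Nat.strong_induction_on with
  | _ n ih =>
    match n with
    | 0 =>
      constructor
      · intro l
        rw [Finset.sum_range_one, besselB_zero_zero]
        match l with
        | 0 => rw [besselb_zero_zero, if_pos rfl]; norm_num
        | (l+1) => rw [besselb_zero_of_lt (by omega), if_neg (by omega)]; norm_num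
      · intro l
        rw [Finset.sum_range_one, besselB_zero_zero, tT_eq_besselb_one]
        norm_num
    | 1 =>
      constructor
      · intro l
        rw [Finset.sum_range_succ, Finset.sum_range_one, besselB_succ_zero,
          besselB_one_one]
        match l with
        | 0 => rw [besselb_succ_zero, if_neg (by omega)]; norm_num
        | 1 => rw [besselb_diag, if_pos rfl]; norm_num
        | (l+2) =>
          rw [besselb_zero_of_lt (show (0:ℕ) < l + 2 by omega),
            besselb_zero_of_lt (show (1:ℕ) < l + 2 by omega), if_neg (by omega)]
          norm_num
      · intro l
        rw [Finset.sum_range_succ, Finset.sum_range_one, besselB_succ_zero,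
          besselB_one_one, tT_one_eq]
        norm_num
    | (m+2) =>
      have ihS1 := (ih (m+1) (by omega)).2
      have ihS0 := (ih m (by omega)).2
      -- step A : the delta formula at m+2
      have hS : ∀ l, (∑ k ∈ Finset.range (m + 2 + 1), (besselB (m+2) k : ℚ) * besselb k l)
          = if m + 2 = l then 1 else 0 := by
        intro l
        rw [Finset.sum_range_succ']
        rw [besselB_succ_zero]
        have hcong : ∀ i ∈ Finset.range (m + 2),
            (besselB (m+2) (i+1) : ℚ) * besselb (i+1) l
              = (besselB (m+1) i : ℚ) * besselb (i+1) l
                + ((m : ℚ) + 1) * ((besselB m i : ℚ) * besselb (i+1) l) := by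
          intro i _
          rw [Bq_rec]
          ring
        rw [Finset.sum_congr rfl hcong, Finset.sum_add_distrib, ← Finset.mul_sum]
        have hT1 : (∑ i ∈ Finset.range (m + 2), (besselB (m+1) i : ℚ) * besselb (i+1) l)
            = tT (m+1) l := ihS1 l
        have hT0 : (∑ i ∈ Finset.range (m + 2), (besselB m i : ℚ) * besselb (i+1) l)
            = tT m l := by
          rw [Finset.sum_range_succ, besselB_zero_of_lt (by omega)]
          rw [ihS0 l]
          norm_num
        rw [hT1, hT0]
        simpa using tT_I1 m l
      refine ⟨hS, ?_⟩
      -- step B : the T formula at m+2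
      intro l
      match l with
      | 0 =>
        rw [tT_zero_left]
        apply Finset.sum_eq_zero
        intro k _
        rw [besselb_succ_zero]
        ring
      | (l'+1) =>
        have hcong : ∀ k ∈ Finset.range (m + 3),
            (besselB (m+2) k : ℚ) * besselb (k+1) (l'+1)
              = (besselB (m+2) k : ℚ) * besselb k l'
                + ((l' : ℚ) + 1) * ((besselB (m+2) k : ℚ) * besselb k (l'+1))
                - 2 * (k : ℚ) * (besselB (m+2) k : ℚ) * besselb k (l'+1) := by
          intro k _
          rw [besselb_rec]
          ring
        rw [Finset.sum_congr rfl hcong]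
        rw [Finset.sum_sub_distrib, Finset.sum_add_distrib, ← Finset.mul_sum]
        have hU : (∑ k ∈ Finset.range (m + 3),
            2 * (k : ℚ) * (besselB (m+2) k : ℚ) * besselb k (l'+1))
            = 2 * ((m : ℚ) + 2) * tT (m+1) (l'+1)
              + ((m : ℚ) + 2) * ((m : ℚ) + 1) * tT m (l'+1) := by
          rw [Finset.sum_range_succ']
          have hzero : 2 * ((0 : ℕ) : ℚ) * (besselB (m+2) 0 : ℚ) * besselb 0 (l'+1) = 0 := by
            norm_num
          rw [hzero, add_zero]
          have hcong2 : ∀ i ∈ Finset.range (m + 2),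
              2 * ((i + 1 : ℕ) : ℚ) * (besselB (m+2) (i+1) : ℚ) * besselb (i+1) (l'+1)
                = 2 * ((m : ℚ) + 2) * ((besselB (m+1) i : ℚ) * besselb (i+1) (l'+1))
                  + ((m : ℚ) + 2) * ((m : ℚ) + 1) * ((besselB m i : ℚ) * besselb (i+1) (l'+1)) := by
            intro i _
            have h := Bq_iB m i
            push_cast
            push_cast at h
            linear_combination besselb (i+1) (l'+1) * h
          rw [Finset.sum_congr rfl hcong2, Finset.sum_add_distrib, ← Finset.mul_sum,
            ← Finset.mul_sum]
          have hT1 : (∑ i ∈ Finset.range (m + 2),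
              (besselB (m+1) i : ℚ) * besselb (i+1) (l'+1)) = tT (m+1) (l'+1) := ihS1 _
          have hT0 : (∑ i ∈ Finset.range (m + 2),
              (besselB m i : ℚ) * besselb (i+1) (l'+1)) = tT m (l'+1) := by
            rw [Finset.sum_range_succ, besselB_zero_of_lt (by omega), ihS0 _]
            norm_num
          rw [hT1, hT0]
        rw [hU, hS l', hS (l'+1)]
        have := tT_I2 m l'
        rw [show m + 2 + 1 = m + 3 by ring] at *
        linear_combination -this

/-- First inverse formula: `Σ_{k=0}^n B(n,k) b(k,l) = δ_{n,l}`. -/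
theorem stmt_7 (n l : ℕ) :
    ∑ k ∈ Finset.range (n + 1), (besselB n k : ℚ) * besselb k l =
      if n = l then 1 else 0 := by
  exact (main_sum n).1 l
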